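/- arXiv:1906.11333 — 3 statements merged into one kernel-verified Lean document; each statement's English description precedes it below -/
import Mathlib

section
/- Let W1, W2 be independent standard Gaussian random variables, let μ ∈ ℝ, σ_A > 0, σ > 0, β ≠ 0, and define X = μ + σ_A·W1 and Y = β·X + σ·W2. Set ρ = β²σ_A²/(β²σ_A² + σ²). Then the conditional distribution of X given Y is Gaussian with mean (1−ρ)·μ + ρ·Y/β and variance σ²·ρ/β²; in particular E[X | Y] = (1−ρ)·μ + ρ·Y/β almost surely. -/
open MeasureTheory ProbabilityTheory

open Real Set
open scoped NNReal ENNReal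

namespace GaussAux

lemma measurable_gaussianPDF' {v : ℝ≥0} {m : ℝ → ℝ} (hm : Measurable m) :
    Measurable fun p : ℝ × ℝ => gaussianPDF (m p.1) v p.2 := by
  unfold gaussianPDF gaussianPDFReal
  apply ENNReal.measurable_ofReal.comp
  apply Measurable.const_mul
  apply Real.measurable_exp.comp
  apply Measurable.div_const
  exact ((measurable_snd.sub (hm.comp measurable_fst)).pow_const 2).neg

lemma measurable_gaussianReal_fun {v : ℝ≥0} {m : ℝ → ℝ} (hm : Measurable m) :
    Measurable fun y => gaussianReal (m y) v := by
  by_cases hv : v = 0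
  · simp only [hv, gaussianReal_zero_var]
    exact Measure.measurable_dirac.comp hm
  · apply Measure.measurable_of_measurable_coe
    intro s hs
    simp_rw [gaussianReal_apply _ hv]
    exact Measurable.lintegral_prod_right' (f := fun p : ℝ × ℝ => gaussianPDF (m p.1) v p.2)
      (measurable_gaussianPDF' hm)

/-- The conditional kernel. -/
noncomputable def condKer (μ₀ σ β ρ : ℝ) : Kernel ℝ ℝ :=
  ⟨fun y => gaussianReal ((1 - ρ) * μ₀ + ρ * y / β) ((σ ^ 2 * ρ / β ^ 2).toNNReal),
   measurable_gaussianReal_fun (((measurable_id.const_mul ρ).div_const β).const_add _)⟩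

@[simp] lemma condKer_apply (μ₀ σ β ρ y : ℝ) :
    condKer μ₀ σ β ρ y
      = gaussianReal ((1 - ρ) * μ₀ + ρ * y / β) ((σ ^ 2 * ρ / β ^ 2).toNNReal) := rfl

instance (μ₀ σ β ρ : ℝ) : IsMarkovKernel (condKer μ₀ σ β ρ) :=
  ⟨fun y => by rw [condKer_apply]; infer_instance⟩

lemma pdf_key {μ₀ σA σ β ρ : ℝ} (hσA : 0 < σA) (hσ : 0 < σ) (hβ : β ≠ 0)
    (hρ : ρ = β ^ 2 * σA ^ 2 / (β ^ 2 * σA ^ 2 + σ ^ 2)) (x y : ℝ) :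
    gaussianPDFReal μ₀ ((σA ^ 2).toNNReal) x * gaussianPDFReal (β * x) ((σ ^ 2).toNNReal) y
      = gaussianPDFReal (β * μ₀) ((β ^ 2 * σA ^ 2 + σ ^ 2).toNNReal) y *
        gaussianPDFReal ((1 - ρ) * μ₀ + ρ * y / β) ((σ ^ 2 * ρ / β ^ 2).toNNReal) x := by
  have hS : (0:ℝ) < β ^ 2 * σA ^ 2 + σ ^ 2 := by positivity
  have hρpos : 0 < ρ := by rw [hρ]; positivity
  have hV : (0:ℝ) < σ ^ 2 * ρ / β ^ 2 := by positivity
  unfold gaussianPDFReal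
  rw [Real.coe_toNNReal _ (sq_nonneg σA), Real.coe_toNNReal _ (sq_nonneg σ),
    Real.coe_toNNReal _ hS.le, Real.coe_toNNReal _ hV.le]
  have hconst : (√(2 * π * σA ^ 2))⁻¹ * (√(2 * π * σ ^ 2))⁻¹
      = (√(2 * π * (β ^ 2 * σA ^ 2 + σ ^ 2)))⁻¹ * (√(2 * π * (σ ^ 2 * ρ / β ^ 2)))⁻¹ := by
    rw [← mul_inv, ← mul_inv, ← Real.sqrt_mul (by positivity), ← Real.sqrt_mul (by positivity)]
    congr 2
    rw [hρ]
    field_simp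
  have hexp : -(x - μ₀) ^ 2 / (2 * σA ^ 2) + -(y - β * x) ^ 2 / (2 * σ ^ 2)
      = -(y - β * μ₀) ^ 2 / (2 * (β ^ 2 * σA ^ 2 + σ ^ 2))
        + -(x - ((1 - ρ) * μ₀ + ρ * y / β)) ^ 2 / (2 * (σ ^ 2 * ρ / β ^ 2)) := by
    rw [hρ]
    field_simp
    ring
  calc (√(2 * π * σA ^ 2))⁻¹ * rexp (-(x - μ₀) ^ 2 / (2 * σA ^ 2)) *
        ((√(2 * π * σ ^ 2))⁻¹ * rexp (-(y - β * x) ^ 2 / (2 * σ ^ 2)))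
      = ((√(2 * π * σA ^ 2))⁻¹ * (√(2 * π * σ ^ 2))⁻¹) *
        rexp (-(x - μ₀) ^ 2 / (2 * σA ^ 2) + -(y - β * x) ^ 2 / (2 * σ ^ 2)) := by
        rw [Real.exp_add]; ring
    _ = ((√(2 * π * (β ^ 2 * σA ^ 2 + σ ^ 2)))⁻¹ * (√(2 * π * (σ ^ 2 * ρ / β ^ 2)))⁻¹) *
        rexp (-(y - β * μ₀) ^ 2 / (2 * (β ^ 2 * σA ^ 2 + σ ^ 2))
          + -(x - ((1 - ρ) * μ₀ + ρ * y / β)) ^ 2 / (2 * (σ ^ 2 * ρ / β ^ 2))) := by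
        rw [hconst, hexp]
    _ = _ := by rw [Real.exp_add]; ring

lemma map_affine (a b : ℝ) :
    (gaussianReal 0 1).map (fun x => a + b * x) = gaussianReal a ((b ^ 2).toNNReal) := by
  have h1 : (gaussianReal 0 1).map (fun x => b * x) = gaussianReal (b * 0) (NNReal.mk (b ^ 2) (sq_nonneg _) * 1) :=
    gaussianReal_map_const_mul b
  have h2 : (fun x => a + b * x) = (fun x => x + a) ∘ (fun x => b * x) := by
    funext x; simp [add_comm]
  rw [h2, ← Measure.map_map (measurable_add_const a) (measurable_const_mul b), h1,
    gaussianReal_map_add_const a]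
  congr 1
  · ring
  · ext; simp [Real.coe_toNNReal _ (sq_nonneg b)]

lemma key {μ₀ σA σ β ρ : ℝ} (hσA : 0 < σA) (hσ : 0 < σ) (hβ : β ≠ 0)
    (hρ : ρ = β ^ 2 * σA ^ 2 / (β ^ 2 * σA ^ 2 + σ ^ 2)) :
    Measure.map (fun p : ℝ × ℝ => (β * μ₀ + β * σA * p.1 + σ * p.2, μ₀ + σA * p.1))
        ((gaussianReal 0 1).prod (gaussianReal 0 1))
      = (gaussianReal (β * μ₀) ((β ^ 2 * σA ^ 2 + σ ^ 2).toNNReal)) ⊗ₘ condKer μ₀ σ β ρ := by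
  have hS : (0:ℝ) < β ^ 2 * σA ^ 2 + σ ^ 2 := by positivity
  have hρpos : 0 < ρ := by rw [hρ]; positivity
  have hVpos : (0:ℝ) < σ ^ 2 * ρ / β ^ 2 := by positivity
  have hvA : (σA ^ 2).toNNReal ≠ 0 := by
    rw [ne_eq, Real.toNNReal_eq_zero]; push_neg; positivity
  have hvσ : (σ ^ 2).toNNReal ≠ 0 := by
    rw [ne_eq, Real.toNNReal_eq_zero]; push_neg; positivity
  have hvS : ((β ^ 2 * σA ^ 2 + σ ^ 2).toNNReal) ≠ 0 := by
    rw [ne_eq, Real.toNNReal_eq_zero]; push_neg; exact hS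
  have hvV : ((σ ^ 2 * ρ / β ^ 2).toNNReal) ≠ 0 := by
    rw [ne_eq, Real.toNNReal_eq_zero]; push_neg; exact hVpos
  have hg : Measurable (fun p : ℝ × ℝ => (β * μ₀ + β * σA * p.1 + σ * p.2, μ₀ + σA * p.1)) := by
    fun_prop
  have hker1 : ∀ s : Set ℝ, MeasurableSet s →
      Measurable fun x => gaussianReal (β * x) ((σ ^ 2).toNNReal) s := fun s hs =>
    (Measure.measurable_coe hs).comp (measurable_gaussianReal_fun (measurable_id.const_mul β))
  have hker2 : ∀ t : Set ℝ, MeasurableSet t →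
      Measurable fun y =>
        gaussianReal ((1 - ρ) * μ₀ + ρ * y / β) ((σ ^ 2 * ρ / β ^ 2).toNNReal) t := fun t ht =>
    (Measure.measurable_coe ht).comp
      (measurable_gaussianReal_fun (((measurable_id.const_mul ρ).div_const β).const_add _))
  haveI : IsProbabilityMeasure (Measure.map
      (fun p : ℝ × ℝ => (β * μ₀ + β * σA * p.1 + σ * p.2, μ₀ + σA * p.1))
      ((gaussianReal 0 1).prod (gaussianReal 0 1))) :=
    Measure.isProbabilityMeasure_map hg.aemeasurable
  refine ext_of_generate_finite _ generateFrom_prod.symm isPiSystem_prod ?_ (by simp)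
  rintro A ⟨s, hs, t, ht, rfl⟩
  simp only [Set.mem_setOf_eq] at hs ht
  -- LHS computation
  have hL : Measure.map (fun p : ℝ × ℝ => (β * μ₀ + β * σA * p.1 + σ * p.2, μ₀ + σA * p.1))
        ((gaussianReal 0 1).prod (gaussianReal 0 1)) (s ×ˢ t)
      = ∫⁻ x in t, ∫⁻ y in s,
          gaussianPDF μ₀ ((σA ^ 2).toNNReal) x * gaussianPDF (β * x) ((σ ^ 2).toNNReal) y
          ∂volume ∂volume := by
    rw [Measure.map_apply hg (hs.prod ht), Measure.prod_apply (hg (hs.prod ht))]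
    have hpre : ∀ w1 : ℝ, (gaussianReal 0 1)
          (Prod.mk w1 ⁻¹' ((fun p : ℝ × ℝ =>
            (β * μ₀ + β * σA * p.1 + σ * p.2, μ₀ + σA * p.1)) ⁻¹' (s ×ˢ t)))
        = t.indicator (fun x => gaussianReal (β * x) ((σ ^ 2).toNNReal) s) (μ₀ + σA * w1) := by
      intro w1
      by_cases h : μ₀ + σA * w1 ∈ t
      · rw [Set.indicator_of_mem h]
        have hset : Prod.mk w1 ⁻¹' ((fun p : ℝ × ℝ =>
              (β * μ₀ + β * σA * p.1 + σ * p.2, μ₀ + σA * p.1)) ⁻¹' (s ×ˢ t))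
            = (fun w2 => (β * μ₀ + β * σA * w1) + σ * w2) ⁻¹' s := by
          ext w2
          simp [h]
        rw [hset, ← Measure.map_apply (by fun_prop) hs, map_affine (β * μ₀ + β * σA * w1) σ]
        congr 1
        ring
      · rw [Set.indicator_of_notMem h]
        have hset : Prod.mk w1 ⁻¹' ((fun p : ℝ × ℝ =>
              (β * μ₀ + β * σA * p.1 + σ * p.2, μ₀ + σA * p.1)) ⁻¹' (s ×ˢ t)) = ∅ := by
          ext w2; simp [h]
        rw [hset, measure_empty]
    rw [lintegral_congr hpre,
      ← lintegral_map ((hker1 s hs).indicator ht)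
        (show Measurable fun w : ℝ => μ₀ + σA * w by fun_prop),
      map_affine μ₀ σA, lintegral_indicator ht,
      gaussianReal_of_var_ne_zero _ hvA, restrict_withDensity ht,
      lintegral_withDensity_eq_lintegral_mul _ (measurable_gaussianPDF _ _) (hker1 s hs)]
    apply lintegral_congr
    intro x
    simp only [Pi.mul_apply]
    rw [gaussianReal_apply _ hvσ, ← lintegral_const_mul _ (measurable_gaussianPDF _ _)]
  -- RHS computation
  have hR : (gaussianReal (β * μ₀) ((β ^ 2 * σA ^ 2 + σ ^ 2).toNNReal) ⊗ₘ condKer μ₀ σ β ρ)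
        (s ×ˢ t)
      = ∫⁻ y in s, ∫⁻ x in t,
          gaussianPDF (β * μ₀) ((β ^ 2 * σA ^ 2 + σ ^ 2).toNNReal) y *
            gaussianPDF ((1 - ρ) * μ₀ + ρ * y / β) ((σ ^ 2 * ρ / β ^ 2).toNNReal) x
          ∂volume ∂volume := by
    rw [Measure.compProd_apply (hs.prod ht)]
    have hpre : ∀ y : ℝ, condKer μ₀ σ β ρ y (Prod.mk y ⁻¹' (s ×ˢ t))
        = s.indicator (fun y =>
            gaussianReal ((1 - ρ) * μ₀ + ρ * y / β) ((σ ^ 2 * ρ / β ^ 2).toNNReal) t) y := by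
      intro y
      by_cases h : y ∈ s
      · rw [Set.indicator_of_mem h]
        have hset : Prod.mk y ⁻¹' (s ×ˢ t) = t := by ext x; simp [h]
        rw [hset, condKer_apply]
      · rw [Set.indicator_of_notMem h]
        have hset : Prod.mk y ⁻¹' (s ×ˢ t) = ∅ := by ext x; simp [h]
        rw [hset, measure_empty]
    rw [lintegral_congr hpre, lintegral_indicator hs,
      gaussianReal_of_var_ne_zero _ hvS, restrict_withDensity hs,
      lintegral_withDensity_eq_lintegral_mul _ (measurable_gaussianPDF _ _) (hker2 t ht)]
    apply lintegral_congr
    intro y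
    simp only [Pi.mul_apply]
    rw [gaussianReal_apply _ hvV, ← lintegral_const_mul _ (measurable_gaussianPDF _ _)]
  rw [hL, hR]
  rw [lintegral_lintegral_swap]
  · apply lintegral_congr
    intro y
    apply lintegral_congr
    intro x
    show gaussianPDF μ₀ _ x * gaussianPDF (β * x) _ y = _
    unfold gaussianPDF
    rw [← ENNReal.ofReal_mul (gaussianPDFReal_nonneg _ _ _),
      ← ENNReal.ofReal_mul (gaussianPDFReal_nonneg _ _ _)]
    exact congrArg ENNReal.ofReal (pdf_key hσA hσ hβ hρ x y)
  · apply Measurable.aemeasurable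
    exact ((measurable_gaussianPDF μ₀ _).comp measurable_fst).mul
      (measurable_gaussianPDF' (measurable_id.const_mul β))

lemma integrable_id_gaussianReal (m : ℝ) (v : ℝ≥0) : Integrable id (gaussianReal m v) := by
  by_cases hv : v = 0
  · rw [hv, gaussianReal_zero_var]
    refine ⟨measurable_id.aestronglyMeasurable, ?_⟩
    rw [HasFiniteIntegral, lintegral_dirac]
    exact ENNReal.coe_lt_top
  · rw [gaussianReal_of_var_ne_zero _ hv]
    rw [integrable_withDensity_iff (measurable_gaussianPDF _ _)
      (ae_of_all _ fun x => ENNReal.ofReal_lt_top)]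
    have hb : (0:ℝ) < (2 * (v:ℝ))⁻¹ := by
      have : (0:ℝ) < (v:ℝ) := by positivity
      positivity
    have h1 : Integrable (fun u : ℝ => u * rexp (-(2 * (v:ℝ))⁻¹ * u ^ 2)) := by
      have := integrable_rpow_mul_exp_neg_mul_sq hb (s := 1) (by norm_num)
      simpa using this
    have h2 : Integrable (fun u : ℝ => rexp (-(2 * (v:ℝ))⁻¹ * u ^ 2)) :=
      integrable_exp_neg_mul_sq hb
    have h3 : Integrable (fun u : ℝ => (u + m) * rexp (-(2 * (v:ℝ))⁻¹ * u ^ 2)) :=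
      (h1.add (h2.const_mul m)).congr (Filter.Eventually.of_forall fun u => by
        simp only [Pi.add_apply]; ring)
    have h4 : Integrable (fun x : ℝ => x * rexp (-(2 * (v:ℝ))⁻¹ * (x - m) ^ 2)) :=
      (h3.comp_sub_right m).congr (Filter.Eventually.of_forall fun x => by ring_nf)
    have h5 : Integrable (fun x : ℝ => x * ((√(2 * π * v))⁻¹ * rexp (-(2 * (v:ℝ))⁻¹ * (x - m) ^ 2))) :=
      (h4.const_mul (√(2 * π * (v:ℝ)))⁻¹).congr (Filter.Eventually.of_forall fun x => by ring)
    refine h5.congr (Filter.Eventually.of_forall fun x => ?_)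
    simp only [gaussianPDF, gaussianPDFReal, id]
    rw [ENNReal.toReal_ofReal (by positivity)]
    ring_nf

lemma integral_id_gaussianReal (m : ℝ) (v : ℝ≥0) : ∫ x, x ∂gaussianReal m v = m := by
  by_cases hv : v = 0
  · simp [hv]
  have hvv : (NNReal.mk ((-1:ℝ)^2) (sq_nonneg _) * v : ℝ≥0) = v := by ext; norm_num
  have hneg : (gaussianReal 0 v).map (fun x => (-1 : ℝ) * x) = gaussianReal 0 v := by
    rw [gaussianReal_map_const_mul, hvv]; norm_num
  have h0 : ∫ x, x ∂gaussianReal 0 v = 0 := by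
    have hint := integrable_id_gaussianReal 0 v
    have h := integral_map (μ := gaussianReal 0 v) (φ := fun x => (-1:ℝ) * x)
      (f := fun x => x) (measurable_const_mul (-1)).aemeasurable
      (by rw [hneg]; exact hint.1)
    rw [hneg] at h
    simp only [neg_one_mul] at h
    rw [integral_neg] at h
    linarith
  have hmap : gaussianReal m v = (gaussianReal 0 v).map (· + m) := by
    rw [gaussianReal_map_add_const]; simp
  rw [hmap, integral_map (measurable_add_const m).aemeasurable
    (by rw [← hmap]; exact (integrable_id_gaussianReal m v).1)]
  rw [integral_add (f := fun x => x) (g := fun _ => m)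
    (integrable_id_gaussianReal 0 v) (integrable_const m)]
  simp [h0]

end GaussAux

open GaussAux

/-- **Bivariate Gaussian conditioning.**
With `W1, W2` independent standard Gaussians, `X = μ₀ + σ_A·W1`, `Y = β·X + σ·W2` and
`ρ = β²σ_A²/(β²σ_A² + σ²)`, the conditional distribution of `X` given `Y = y` is Gaussian
with mean `(1−ρ)·μ₀ + ρ·y/β` and variance `σ²·ρ/β²`; in particular
`E[X ∣ Y] = (1−ρ)·μ₀ + ρ·Y/β` almost surely. -/
theorem gaussian_condDistrib_linear
    {Ω : Type*} [MeasurableSpace Ω] (μ : Measure Ω) [IsProbabilityMeasure μ]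
    (W1 W2 : Ω → ℝ) (hW1 : Measurable W1) (hW2 : Measurable W2)
    (hW : IndepFun W1 W2 μ)
    (hW1law : μ.map W1 = gaussianReal 0 1) (hW2law : μ.map W2 = gaussianReal 0 1)
    (μ₀ σA σ β : ℝ) (hσA : 0 < σA) (hσ : 0 < σ) (hβ : β ≠ 0)
    (X Y : Ω → ℝ) (hX : X = fun ω => μ₀ + σA * W1 ω)
    (hY : Y = fun ω => β * X ω + σ * W2 ω)
    (ρ : ℝ) (hρ : ρ = β ^ 2 * σA ^ 2 / (β ^ 2 * σA ^ 2 + σ ^ 2)) :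
    (∀ᵐ y ∂(μ.map Y),
        condDistrib X Y μ y
          = gaussianReal ((1 - ρ) * μ₀ + ρ * y / β) ((σ ^ 2 * ρ / β ^ 2).toNNReal))
      ∧ μ[X | MeasurableSpace.comap Y inferInstance]
          =ᵐ[μ] fun ω => (1 - ρ) * μ₀ + ρ * Y ω / β := by
  have hXm : Measurable X := by rw [hX]; fun_prop
  have hYm : Measurable Y := by rw [hY, hX]; fun_prop
  have hg : Measurable (fun p : ℝ × ℝ => (β * μ₀ + β * σA * p.1 + σ * p.2, μ₀ + σA * p.1)) := by
    fun_prop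
  have hpair : μ.map (fun ω => (W1 ω, W2 ω)) = (gaussianReal 0 1).prod (gaussianReal 0 1) := by
    exact ((indepFun_iff_map_prod_eq_prod_map_map hW1.aemeasurable hW2.aemeasurable).mp hW).trans
      (by rw [hW1law, hW2law])
  have hjoint : μ.map (fun ω => (Y ω, X ω))
      = gaussianReal (β * μ₀) ((β ^ 2 * σA ^ 2 + σ ^ 2).toNNReal) ⊗ₘ condKer μ₀ σ β ρ := by
    have hcomp : (fun ω => (Y ω, X ω))
        = (fun p : ℝ × ℝ => (β * μ₀ + β * σA * p.1 + σ * p.2, μ₀ + σA * p.1))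
            ∘ (fun ω => (W1 ω, W2 ω)) := by
      funext ω
      simp only [hY, hX, Function.comp_apply, Prod.mk.injEq]
      exact ⟨by ring, trivial⟩
    rw [hcomp, ← Measure.map_map hg (hW1.prodMk hW2), hpair, key hσA hσ hβ hρ]
  have hmapY : μ.map Y = gaussianReal (β * μ₀) ((β ^ 2 * σA ^ 2 + σ ^ 2).toNNReal) := by
    rw [← Measure.fst_map_prodMk (X := Y) (Y := X) (μ := μ) hXm, hjoint, Measure.fst_compProd]
  have h1 : ∀ᵐ y ∂μ.map Y, condKer μ₀ σ β ρ y = condDistrib X Y μ y :=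
    (condDistrib_ae_eq_of_measure_eq_compProd Y hXm.aemeasurable (by rw [hmapY]; exact hjoint)).mono fun y hy => hy.symm
  constructor
  · filter_upwards [h1] with y hy
    rw [← hy, condKer_apply]
  · have hXlaw : μ.map X = gaussianReal μ₀ ((σA ^ 2).toNNReal) := by
      rw [hX, show (fun ω => μ₀ + σA * W1 ω) = (fun x => μ₀ + σA * x) ∘ W1 from rfl,
        ← Measure.map_map (by fun_prop) hW1, hW1law, map_affine]
    have hXint : Integrable X μ := by
      have hid : Integrable id (μ.map X) := by
        rw [hXlaw]; exact integrable_id_gaussianReal _ _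
      exact (integrable_map_measure
        (by rw [hXlaw]; exact measurable_id.aestronglyMeasurable) hXm.aemeasurable).mp hid
    have h2 := condExp_ae_eq_integral_condDistrib' (Y := X) (X := Y) hYm hXint
    have h3 : ∀ᵐ ω ∂μ, condKer μ₀ σ β ρ (Y ω) = condDistrib X Y μ (Y ω) :=
      ae_of_ae_map hYm.aemeasurable h1
    filter_upwards [h2, h3] with ω h2ω h3ω
    rw [h2ω, ← h3ω, condKer_apply, GaussAux.integral_id_gaussianReal]
end

section
/- Let A, Y, and ε be random variables on a common probability space taking values in measurable spaces, and suppose ε is independent of the pair (A, Y). Then for any measurable function f, the prediction R = f(Y, ε) satisfies Separation: R and A are conditionally independent given Y. -/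
open MeasureTheory ProbabilityTheory

/-- Key computation: if the measure factorizes on sets of the form
`ε ⁻¹' t ∩ (B ∩ Y ⁻¹' w)`, then the conditional expectation given `σ(Y)` of the
indicator of `ε ⁻¹' t ∩ B` is `μ (ε ⁻¹' t) * μ⟦B | σ(Y)⟧`. -/
lemma key_condexp_aux {Ω : Type*} [mΩ : MeasurableSpace Ω]
    (μ : Measure Ω) [IsProbabilityMeasure μ]
    {γ E : Type*} [MeasurableSpace γ] [MeasurableSpace E]
    (Y : Ω → γ) (ε : Ω → E) (hY : Measurable Y) (hε : Measurable ε)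
    {t : Set E} (ht : MeasurableSet t) {B : Set Ω} (hB : MeasurableSet B)
    (hfact : ∀ w : Set γ, MeasurableSet w →
      μ (ε ⁻¹' t ∩ (B ∩ Y ⁻¹' w)) = μ (ε ⁻¹' t) * μ (B ∩ Y ⁻¹' w)) :
    (μ⟦ε ⁻¹' t ∩ B | MeasurableSpace.comap Y inferInstance⟧)
      =ᵐ[μ] fun ω =>
        (μ (ε ⁻¹' t)).toReal * (μ⟦B | MeasurableSpace.comap Y inferInstance⟧) ω := by
  have hmY : MeasurableSpace.comap Y inferInstance ≤ mΩ := hY.comap_le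
  have hBint : Integrable (B.indicator fun _ => (1 : ℝ)) μ :=
    (integrable_const (1 : ℝ)).indicator hB
  have hεBint : Integrable ((ε ⁻¹' t ∩ B).indicator fun _ => (1 : ℝ)) μ :=
    (integrable_const (1 : ℝ)).indicator ((hε ht).inter hB)
  refine (ae_eq_condExp_of_forall_setIntegral_eq hmY hεBint
    (fun s _ _ =>
      (integrable_condExp.const_mul (μ (ε ⁻¹' t)).toReal).integrableOn)
    (fun s hs hμs => ?_) ?_).symm
  · obtain ⟨w, hw, rfl⟩ := hs
    have h1 : ∫ x in Y ⁻¹' w,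
        (μ (ε ⁻¹' t)).toReal *
          (μ⟦B | MeasurableSpace.comap Y inferInstance⟧) x ∂μ
        = (μ (ε ⁻¹' t)).toReal *
          ∫ x in Y ⁻¹' w, (μ⟦B | MeasurableSpace.comap Y inferInstance⟧) x ∂μ := by
      rw [integral_const_mul]
    have h2 : ∫ x in Y ⁻¹' w, (μ⟦B | MeasurableSpace.comap Y inferInstance⟧) x ∂μ
        = ∫ x in Y ⁻¹' w, B.indicator (fun _ => (1 : ℝ)) x ∂μ :=
      setIntegral_condExp hmY hBint ⟨w, hw, rfl⟩
    have h3 : ∫ x in Y ⁻¹' w, B.indicator (fun _ => (1 : ℝ)) x ∂μ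
        = (μ (B ∩ Y ⁻¹' w)).toReal := by
      rw [integral_indicator_const _ hB, measureReal_restrict_apply hB]
      simp [measureReal_def]
    have h4 : ∫ x in Y ⁻¹' w, (ε ⁻¹' t ∩ B).indicator (fun _ => (1 : ℝ)) x ∂μ
        = (μ (ε ⁻¹' t ∩ B ∩ Y ⁻¹' w)).toReal := by
      rw [integral_indicator_const _ ((hε ht).inter hB),
        measureReal_restrict_apply ((hε ht).inter hB)]
      simp [measureReal_def]
    rw [h1, h2, h3, h4, Set.inter_assoc, hfact w hw, ENNReal.toReal_mul]
  · exact (stronglyMeasurable_const.mul stronglyMeasurable_condExp).aestronglyMeasurable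

/-- **Descendants of the response satisfy Separation.**
If the exogenous noise `ε` is independent of the pair `(A, Y)`, then for any measurable
function `f` the prediction `R = f(Y, ε)` is conditionally independent of `A` given `Y`,
i.e. `R` satisfies Separation. -/
theorem descendant_of_response_satisfies_separation
    {Ω : Type*} [MeasurableSpace Ω] [StandardBorelSpace Ω] [Nonempty Ω]
    (μ : Measure Ω) [IsProbabilityMeasure μ]
    {α γ E δ : Type*} [MeasurableSpace α] [MeasurableSpace γ] [MeasurableSpace E]
    [MeasurableSpace δ]
    (A : Ω → α) (Y : Ω → γ) (ε : Ω → E)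
    (hA : Measurable A) (hY : Measurable Y) (hε : Measurable ε)
    (hindep : IndepFun ε (fun ω => (A ω, Y ω)) μ)
    (f : γ × E → δ) (hf : Measurable f) :
    CondIndepFun (MeasurableSpace.comap Y inferInstance) hY.comap_le
      (fun ω => f (Y ω, ε ω)) A μ := by
  have hmY : MeasurableSpace.comap Y inferInstance ≤ ‹MeasurableSpace Ω› := hY.comap_le
  have hYε : Measurable (fun ω => (Y ω, ε ω)) := hY.prodMk hε
  -- main step: (Y, ε) is conditionally independent of A given σ(Y)
  have H : CondIndepFun (MeasurableSpace.comap Y inferInstance) hY.comap_le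
      (fun ω => (Y ω, ε ω)) A μ := by
    rw [condIndepFun_iff_condIndep]
    refine CondIndepSets.condIndep (p1 := Set.preimage (fun ω => (Y ω, ε ω)) ''
        Set.image2 (· ×ˢ ·) { s : Set γ | MeasurableSet s } { t : Set E | MeasurableSet t })
      (p2 := {s | MeasurableSet[MeasurableSpace.comap A inferInstance] s})
      hYε.comap_le hA.comap_le
      (isPiSystem_prod.comap _)
      (fun s hs t ht _ => MeasurableSet.inter
        (show MeasurableSet[MeasurableSpace.comap A inferInstance] s from hs)
        (show MeasurableSet[MeasurableSpace.comap A inferInstance] t from ht))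
      ?_ (@MeasurableSpace.generateFrom_measurableSet Ω (MeasurableSpace.comap A inferInstance)).symm ?_
    · rw [← MeasurableSpace.comap_generateFrom, generateFrom_prod]
    · rw [condIndepSets_iff]
      rotate_left
      · rintro s ⟨S, hS, rfl⟩
        obtain ⟨s', hs', t', ht', rfl⟩ := hS
        exact hYε (hs'.prod ht')
      · exact fun s hs => hA.comap_le s hs
      rintro t1 t2 ⟨S, hS, rfl⟩ ⟨u, hu, rfl⟩
      obtain ⟨s, hs, t, ht, rfl⟩ := hS
      have hpre : (fun ω => (Y ω, ε ω)) ⁻¹' (s ×ˢ t) = Y ⁻¹' s ∩ ε ⁻¹' t :=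
        Set.mk_preimage_prod Y ε
      rw [hpre]
      have hYs : MeasurableSet[MeasurableSpace.comap Y inferInstance] (Y ⁻¹' s) :=
        ⟨s, hs, rfl⟩
      -- factorization facts from independence
      have hfactA : ∀ w : Set γ, MeasurableSet w →
          μ (ε ⁻¹' t ∩ (A ⁻¹' u ∩ Y ⁻¹' w)) = μ (ε ⁻¹' t) * μ (A ⁻¹' u ∩ Y ⁻¹' w) := by
        intro w hw
        have := hindep.measure_inter_preimage_eq_mul t (u ×ˢ w) ht (hu.prod hw)
        rwa [Set.mk_preimage_prod] at this
      have hfactU : ∀ w : Set γ, MeasurableSet w →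
          μ (ε ⁻¹' t ∩ (Set.univ ∩ Y ⁻¹' w)) = μ (ε ⁻¹' t) * μ (Set.univ ∩ Y ⁻¹' w) := by
        intro w hw
        have := hindep.measure_inter_preimage_eq_mul t (Set.univ ×ˢ w)
          ht (MeasurableSet.univ.prod hw)
        rwa [Set.mk_preimage_prod] at this
      -- conditional expectations of the noise parts
      have hkeyA : (μ⟦ε ⁻¹' t ∩ A ⁻¹' u | MeasurableSpace.comap Y inferInstance⟧)
          =ᵐ[μ] fun ω => (μ (ε ⁻¹' t)).toReal *
            (μ⟦A ⁻¹' u | MeasurableSpace.comap Y inferInstance⟧) ω :=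
        key_condexp_aux μ Y ε hY hε ht (hA hu) hfactA
      have hkeyU : (μ⟦ε ⁻¹' t | MeasurableSpace.comap Y inferInstance⟧)
          =ᵐ[μ] fun _ => (μ (ε ⁻¹' t)).toReal := by
        have h1 : (μ⟦ε ⁻¹' t ∩ Set.univ | MeasurableSpace.comap Y inferInstance⟧)
            =ᵐ[μ] fun ω => (μ (ε ⁻¹' t)).toReal *
              (μ⟦(Set.univ : Set Ω) | MeasurableSpace.comap Y inferInstance⟧) ω :=
          key_condexp_aux μ Y ε hY hε ht MeasurableSet.univ hfactU
        rw [Set.inter_univ] at h1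
        have h2 : (μ⟦(Set.univ : Set Ω) | MeasurableSpace.comap Y inferInstance⟧)
            = fun _ => (1 : ℝ) := by
          rw [Set.indicator_univ]
          exact condExp_const hmY 1
        rw [h2] at h1
        simpa using h1
      -- rewrite both sides using indicators pulled out of the condexp
      have hindYs : ∀ C : Set Ω, MeasurableSet C →
          (μ⟦Y ⁻¹' s ∩ C | MeasurableSpace.comap Y inferInstance⟧)
            =ᵐ[μ] (Y ⁻¹' s).indicator
              (μ⟦C | MeasurableSpace.comap Y inferInstance⟧) := by
        intro C hC
        have hi : (Y ⁻¹' s ∩ C).indicator (fun _ => (1 : ℝ))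
            = (Y ⁻¹' s).indicator (C.indicator fun _ => (1 : ℝ)) := by
          rw [Set.indicator_indicator]
        rw [hi]
        exact condExp_indicator ((integrable_const (1 : ℝ)).indicator hC) hYs
      have hεA : MeasurableSet (ε ⁻¹' t ∩ A ⁻¹' u) := (hε ht).inter (hA hu)
      have hL : (μ⟦Y ⁻¹' s ∩ ε ⁻¹' t ∩ A ⁻¹' u | MeasurableSpace.comap Y inferInstance⟧)
          =ᵐ[μ] (Y ⁻¹' s).indicator
            (μ⟦ε ⁻¹' t ∩ A ⁻¹' u | MeasurableSpace.comap Y inferInstance⟧) := by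
        rw [Set.inter_assoc]
        exact hindYs _ hεA
      have hR : (μ⟦Y ⁻¹' s ∩ ε ⁻¹' t | MeasurableSpace.comap Y inferInstance⟧)
          =ᵐ[μ] (Y ⁻¹' s).indicator
            (μ⟦ε ⁻¹' t | MeasurableSpace.comap Y inferInstance⟧) := hindYs _ (hε ht)
      filter_upwards [hL, hR, hkeyA, hkeyU] with ω hLω hRω hAω hUω
      simp only [Pi.mul_apply, hLω, hRω]
      by_cases hω : ω ∈ Y ⁻¹' s
      · simp only [Set.indicator_of_mem hω, hAω, hUω]
      · simp [Set.indicator_of_notMem hω]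
  -- transfer along `f` and `id`
  have := H.comp hf measurable_id
  simpa [Function.comp_def] using this
end

section
/- Let A and X be random variables taking values in finite sets 𝔸 and 𝕏 with P(A=a, X=x) > 0 for all a ∈ 𝔸, x ∈ 𝕏, let ε be a random element independent of the pair (A, X), and let R = g(A, X, ε) for a measurable function g. Then: (i) for every a ∈ 𝔸 and x ∈ 𝕏, the conditional distribution of R given (A=a, X=x) equals the law of ω ↦ g(a, x, ε(ω)); and (ii) the law of g(a, x, ε) does not depend on a for every fixed x (the controlled-direct-effect criterion) if and only if R and A are conditionally independent given X. -/
open MeasureTheory ProbabilityTheory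

lemma fiber_sum {Ω β : Type*} [MeasurableSpace Ω] [Fintype β] [MeasurableSpace β]
    [MeasurableSingletonClass β] (μ : Measure Ω) {Y : Ω → β} (hY : Measurable Y)
    {T : Set Ω} (hT : MeasurableSet T) :
    μ T = ∑ b : β, μ (T ∩ Y ⁻¹' {b}) := by
  have hdisj : Pairwise (Function.onFun Disjoint (fun b : β => T ∩ Y ⁻¹' {b})) := by
    intro b b' hbb'
    simp only [Function.onFun, Set.disjoint_left]
    rintro ω ⟨-, hb⟩ ⟨-, hb'⟩
    exact hbb' (by simp only [Set.mem_preimage, Set.mem_singleton_iff] at hb hb'; rw [← hb, hb'])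
  have hmeas : ∀ b : β, MeasurableSet (T ∩ Y ⁻¹' {b}) :=
    fun b => hT.inter (hY (measurableSet_singleton b))
  calc μ T = μ (⋃ b : β, T ∩ Y ⁻¹' {b}) := by congr 1; ext ω; simp
    _ = ∑' b : β, μ (T ∩ Y ⁻¹' {b}) := measure_iUnion hdisj hmeas
    _ = ∑ b : β, μ (T ∩ Y ⁻¹' {b}) := tsum_fintype _

lemma eq_of_comp_ae_eq {Ω β γ : Type*} [MeasurableSpace Ω] {μ : Measure Ω}
    {X : Ω → β} {F G : β → γ} (h : (fun ω => F (X ω)) =ᵐ[μ] (fun ω => G (X ω)))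
    {x : β} (hx : μ (X ⁻¹' {x}) ≠ 0) : F x = G x := by
  by_contra hne
  apply hx
  refine measure_mono_null (fun ω hω => ?_) (ae_iff.mp h)
  simp only [Set.mem_preimage, Set.mem_singleton_iff] at hω
  simp only [Set.mem_setOf_eq, hω]
  exact hne

lemma condexp_comap_discrete {Ω 𝕏 : Type*} [mΩ : MeasurableSpace Ω] (μ : Measure Ω)
    [IsProbabilityMeasure μ] [Fintype 𝕏] [MeasurableSpace 𝕏] [MeasurableSingletonClass 𝕏]
    {X : Ω → 𝕏} (hX : Measurable X) {S : Set Ω} (hS : MeasurableSet S) :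
    μ⟦S | MeasurableSpace.comap X inferInstance⟧
      =ᵐ[μ] fun ω => (μ (S ∩ X ⁻¹' {X ω})).toReal / (μ (X ⁻¹' {X ω})).toReal := by
  have hm' : MeasurableSpace.comap X inferInstance ≤ mΩ := hX.comap_le
  set c : 𝕏 → ℝ := fun x => (μ (S ∩ X ⁻¹' {x})).toReal / (μ (X ⁻¹' {x})).toReal with hc
  set G : Ω → ℝ := fun ω => c (X ω) with hG
  have hGsum : ∀ ω, G ω = ∑ x : 𝕏, (X ⁻¹' {x}).indicator (fun _ => c x) ω := by
    intro ω
    rw [Finset.sum_eq_single_of_mem (X ω) (Finset.mem_univ _)]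
    · simp [Set.indicator_of_mem, G]
    · intro b _ hb
      exact Set.indicator_of_notMem (by simp [hb.symm]) _
  have hGint : Integrable G μ := by
    have : Integrable (fun ω => ∑ x : 𝕏, (X ⁻¹' {x}).indicator (fun _ => c x) ω) μ :=
      integrable_finset_sum _ fun x _ =>
        (integrable_const _).indicator (hX (measurableSet_singleton x))
    exact this.congr (Filter.Eventually.of_forall fun ω => (hGsum ω).symm)
  have key : ∀ x : 𝕏, (μ (X ⁻¹' {x})).toReal * c x = (μ (S ∩ X ⁻¹' {x})).toReal := by
    intro x
    by_cases h0 : μ (X ⁻¹' {x}) = 0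
    · have : μ (S ∩ X ⁻¹' {x}) = 0 :=
        measure_mono_null Set.inter_subset_right h0
      simp [c, h0, this]
    · rw [hc, mul_comm, div_mul_cancel₀]
      exact ENNReal.toReal_ne_zero.mpr ⟨h0, measure_ne_top μ _⟩
  refine (ae_eq_condExp_of_forall_setIntegral_eq hm'
    ((integrable_const (1:ℝ)).indicator hS) (fun s _ _ => hGint.integrableOn)
    (fun s hs _ => ?_) ?_).symm
  · obtain ⟨t, -, rfl⟩ := hs
    have htm : MeasurableSet t := (Set.toFinite t).measurableSet
    have hRHS : ∫ ω in X ⁻¹' t, S.indicator (fun _ => (1:ℝ)) ω ∂μ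
        = (μ (S ∩ X ⁻¹' t)).toReal := by
      rw [← integral_indicator (hX htm), Set.indicator_indicator, Set.inter_comm,
        integral_indicator_const _ (hS.inter (hX htm))]
      simp [Measure.real]
    have hLHS : ∫ ω in X ⁻¹' t, G ω ∂μ
        = ∑ x : 𝕏, (μ (X ⁻¹' {x} ∩ X ⁻¹' t)).toReal * c x := by
      rw [integral_congr_ae (Filter.Eventually.of_forall hGsum),
        integral_finset_sum]
      · refine Finset.sum_congr rfl fun x _ => ?_
        rw [integral_indicator_const _ (hX (measurableSet_singleton x)),
          Measure.real, Measure.restrict_apply (hX (measurableSet_singleton x))]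
        simp [mul_comm]
      · exact fun x _ =>
          ((integrable_const _).indicator (hX (measurableSet_singleton x))).integrableOn
    rw [hLHS, hRHS, fiber_sum μ hX (hS.inter (hX htm)),
      ENNReal.toReal_sum (fun x _ => measure_ne_top μ _)]
    refine Finset.sum_congr rfl fun x _ => ?_
    by_cases hx : x ∈ t
    · have h1 : X ⁻¹' {x} ∩ X ⁻¹' t = X ⁻¹' {x} := by
        ext ω; simp only [Set.mem_inter_iff, Set.mem_preimage, Set.mem_singleton_iff]
        exact ⟨fun h => h.1, fun h => ⟨h, h ▸ hx⟩⟩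
      have h2 : S ∩ X ⁻¹' t ∩ X ⁻¹' {x} = S ∩ X ⁻¹' {x} := by
        ext ω; simp only [Set.mem_inter_iff, Set.mem_preimage, Set.mem_singleton_iff]
        exact ⟨fun h => ⟨h.1.1, h.2⟩, fun h => ⟨⟨h.1, h.2 ▸ hx⟩, h.2⟩⟩
      rw [h1, h2, key]
    · have h1 : X ⁻¹' {x} ∩ X ⁻¹' t = ∅ := by
        ext ω
        simp only [Set.mem_inter_iff, Set.mem_preimage, Set.mem_singleton_iff,
          Set.mem_empty_iff_false, iff_false, not_and]
        rintro rfl; exact hx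
      have h2 : S ∩ X ⁻¹' t ∩ X ⁻¹' {x} = ∅ := by
        ext ω
        simp only [Set.mem_inter_iff, Set.mem_preimage, Set.mem_singleton_iff,
          Set.mem_empty_iff_false, iff_false, not_and]
        rintro ⟨-, h⟩ rfl; exact hx h
      rw [h1, h2]; simp
  · have hGm : Measurable[MeasurableSpace.comap X inferInstance] G := fun s hs =>
      ⟨c ⁻¹' s, (Set.toFinite _).measurableSet, rfl⟩
    exact StronglyMeasurable.aestronglyMeasurable (Measurable.stronglyMeasurable hGm)

/-- **The controlled-direct-effect criterion is equivalent to Conditional Independence.**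
Let `A`, `X` take values in finite sets with strictly positive joint distribution, let the
exogenous noise `ε` be independent of the pair `(A, X)`, and let `R = g(A, X, ε)`. Then:
(i) the conditional distribution of `R` given `(A = a, X = x)` is the law of
`ω ↦ g(a, x, ε ω)`; and (ii) the law of `g(a, x, ε)` does not depend on `a` for every
fixed `x` if and only if `R` and `A` are conditionally independent given `X`. -/
theorem cde_iff_condIndep
    {Ω : Type*} [MeasurableSpace Ω] [StandardBorelSpace Ω] [Nonempty Ω]
    (μ : Measure Ω) [IsProbabilityMeasure μ]
    {𝔸 𝕏 E δ : Type*} [Fintype 𝔸] [Fintype 𝕏]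
    [MeasurableSpace 𝔸] [MeasurableSingletonClass 𝔸]
    [MeasurableSpace 𝕏] [MeasurableSingletonClass 𝕏]
    [MeasurableSpace E] [MeasurableSpace δ]
    (A : Ω → 𝔸) (X : Ω → 𝕏) (ε : Ω → E)
    (hA : Measurable A) (hX : Measurable X) (hε : Measurable ε)
    (hpos : ∀ (a : 𝔸) (x : 𝕏), 0 < μ {ω | A ω = a ∧ X ω = x})
    (hindep : IndepFun ε (fun ω => (A ω, X ω)) μ)
    (g : 𝔸 × 𝕏 × E → δ) (hg : Measurable g)
    (R : Ω → δ) (hR : R = fun ω => g (A ω, X ω, ε ω)) :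
    (∀ (a : 𝔸) (x : 𝕏),
        (μ[|{ω | A ω = a ∧ X ω = x}]).map R = μ.map (fun ω => g (a, x, ε ω)))
      ∧ ((∀ (x : 𝕏) (a a' : 𝔸),
            μ.map (fun ω => g (a, x, ε ω)) = μ.map (fun ω => g (a', x, ε ω)))
          ↔ CondIndepFun (MeasurableSpace.comap X inferInstance) hX.comap_le R A μ) := by
  classical
  have hRmeas : Measurable R := by
    rw [hR]; exact hg.comp (hA.prodMk (hX.prodMk hε))
  have hgε : ∀ (a : 𝔸) (x : 𝕏), Measurable (fun ω => g (a, x, ε ω)) := fun a x =>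
    hg.comp (measurable_const.prodMk (measurable_const.prodMk hε))
  have hsetAX : ∀ (a : 𝔸) (x : 𝕏),
      {ω | A ω = a ∧ X ω = x} = (fun ω => (A ω, X ω)) ⁻¹' ({a} ×ˢ {x}) := by
    intro a x; ext ω
    simp [Set.mem_prod]
  have hSax : ∀ (a : 𝔸) (x : 𝕏), MeasurableSet {ω | A ω = a ∧ X ω = x} := by
    intro a x
    rw [hsetAX]
    exact (hA.prodMk hX) ((measurableSet_singleton a).prod (measurableSet_singleton x))
  -- Claim A : interventional law times fiber probability
  have claimA : ∀ (a : 𝔸) (x : 𝕏) {s : Set δ}, MeasurableSet s →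
      μ ((fun ω => g (a, x, ε ω)) ⁻¹' s ∩ {ω | A ω = a ∧ X ω = x})
        = μ.map (fun ω => g (a, x, ε ω)) s * μ {ω | A ω = a ∧ X ω = x} := by
    intro a x s hs
    have hgax : Measurable (fun e : E => g (a, x, e)) :=
      hg.comp (measurable_const.prodMk (measurable_const.prodMk measurable_id))
    have h1 : (fun ω => g (a, x, ε ω)) ⁻¹' s = ε ⁻¹' ((fun e : E => g (a, x, e)) ⁻¹' s) := rfl
    rw [h1, hsetAX,
      hindep.measure_inter_preimage_eq_mul _ _ (hgax hs)
        ((measurableSet_singleton a).prod (measurableSet_singleton x)),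
      Measure.map_apply (hgε a x) hs]
    rfl
  -- Claim A' : same for R
  have hsetR : ∀ (a : 𝔸) (x : 𝕏) (s : Set δ),
      R ⁻¹' s ∩ {ω | A ω = a ∧ X ω = x}
        = (fun ω => g (a, x, ε ω)) ⁻¹' s ∩ {ω | A ω = a ∧ X ω = x} := by
    intro a x s
    ext ω
    simp only [Set.mem_inter_iff, Set.mem_preimage, Set.mem_setOf_eq, hR]
    constructor
    · rintro ⟨h1, rfl, rfl⟩; exact ⟨h1, rfl, rfl⟩
    · rintro ⟨h1, rfl, rfl⟩; exact ⟨h1, rfl, rfl⟩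
  have claimA' : ∀ (a : 𝔸) (x : 𝕏) {s : Set δ}, MeasurableSet s →
      μ (R ⁻¹' s ∩ {ω | A ω = a ∧ X ω = x})
        = μ.map (fun ω => g (a, x, ε ω)) s * μ {ω | A ω = a ∧ X ω = x} := by
    intro a x s hs; rw [hsetR, claimA a x hs]
  -- Part (i)
  have part1 : ∀ (a : 𝔸) (x : 𝕏),
      (μ[|{ω | A ω = a ∧ X ω = x}]).map R = μ.map (fun ω => g (a, x, ε ω)) := by
    intro a x
    apply Measure.ext
    intro s hs
    rw [Measure.map_apply hRmeas hs, cond_apply (hSax a x), Set.inter_comm, claimA' a x hs,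
      mul_comm (μ.map (fun ω => g (a, x, ε ω)) s), ← mul_assoc,
      ENNReal.inv_mul_cancel (hpos a x).ne' (measure_ne_top μ _), one_mul]
  refine ⟨part1, ?_⟩
  -- Part (ii)
  have hA0 : Nonempty 𝔸 := ⟨A (Classical.arbitrary Ω)⟩
  have hqpos : ∀ x : 𝕏, μ (X ⁻¹' {x}) ≠ 0 := by
    intro x
    refine fun h => (hpos (Classical.arbitrary 𝔸) x).ne' (measure_mono_null ?_ h)
    rintro ω ⟨-, hx⟩; exact hx
  -- fiber decomposition over A
  have hdecomp : ∀ {T : Set Ω}, MeasurableSet T → ∀ x : 𝕏,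
      μ (T ∩ X ⁻¹' {x}) = ∑ a : 𝔸, μ (T ∩ {ω | A ω = a ∧ X ω = x}) := by
    intro T hT x
    rw [fiber_sum μ hA (hT.inter (hX (measurableSet_singleton x)))]
    refine Finset.sum_congr rfl fun a _ => ?_
    congr 1
    ext ω
    simp only [Set.mem_inter_iff, Set.mem_preimage, Set.mem_singleton_iff, Set.mem_setOf_eq]
    tauto
  have hqdecomp : ∀ x : 𝕏, μ (X ⁻¹' {x}) = ∑ a : 𝔸, μ {ω | A ω = a ∧ X ω = x} := by
    intro x
    have := hdecomp MeasurableSet.univ x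
    simpa using this
  -- the cross-multiplied condition
  set Cross : Prop := ∀ (s : Set δ) (t : Set 𝔸), MeasurableSet s → ∀ x : 𝕏,
      μ (R ⁻¹' s ∩ A ⁻¹' t ∩ X ⁻¹' {x}) * μ (X ⁻¹' {x})
        = μ (R ⁻¹' s ∩ X ⁻¹' {x}) * μ (A ⁻¹' t ∩ X ⁻¹' {x}) with hCross
  have step1 : (∀ (x : 𝕏) (a a' : 𝔸),
      μ.map (fun ω => g (a, x, ε ω)) = μ.map (fun ω => g (a', x, ε ω))) ↔ Cross := by
    constructor
    · intro hcde s t hs x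
      have e1 : μ (R ⁻¹' s ∩ A ⁻¹' t ∩ X ⁻¹' {x})
          = ∑ a : 𝔸, (if a ∈ t then
              μ.map (fun ω => g (a, x, ε ω)) s * μ {ω | A ω = a ∧ X ω = x} else 0) := by
        rw [hdecomp ((hRmeas hs).inter (hA ((Set.toFinite t).measurableSet))) x]
        refine Finset.sum_congr rfl fun a _ => ?_
        by_cases hat : a ∈ t
        · rw [if_pos hat, ← claimA' a x hs]
          congr 1
          ext ω
          simp only [Set.mem_inter_iff, Set.mem_preimage, Set.mem_setOf_eq]
          constructor
          · rintro ⟨⟨h1, -⟩, h3⟩; exact ⟨h1, h3⟩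
          · rintro ⟨h1, rfl, rfl⟩; exact ⟨⟨h1, hat⟩, rfl, rfl⟩
        · rw [if_neg hat]
          convert measure_empty (μ := μ)
          ext ω
          simp only [Set.mem_inter_iff, Set.mem_preimage, Set.mem_setOf_eq,
            Set.mem_empty_iff_false, iff_false]
          rintro ⟨⟨-, h2⟩, rfl, -⟩; exact hat h2
      have e2 : μ (R ⁻¹' s ∩ X ⁻¹' {x})
          = ∑ a : 𝔸, μ.map (fun ω => g (a, x, ε ω)) s * μ {ω | A ω = a ∧ X ω = x} := by
        rw [hdecomp (hRmeas hs) x]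
        exact Finset.sum_congr rfl fun a _ => claimA' a x hs
      have e3 : μ (A ⁻¹' t ∩ X ⁻¹' {x})
          = ∑ a : 𝔸, (if a ∈ t then μ {ω | A ω = a ∧ X ω = x} else 0) := by
        rw [hdecomp (hA ((Set.toFinite t).measurableSet)) x]
        refine Finset.sum_congr rfl fun a _ => ?_
        by_cases hat : a ∈ t
        · rw [if_pos hat]
          congr 1
          ext ω
          simp only [Set.mem_inter_iff, Set.mem_preimage, Set.mem_setOf_eq]
          constructor
          · rintro ⟨-, h⟩; exact h
          · rintro ⟨rfl, rfl⟩; exact ⟨hat, rfl, rfl⟩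
        · rw [if_neg hat]
          convert measure_empty (μ := μ)
          ext ω
          simp only [Set.mem_inter_iff, Set.mem_preimage, Set.mem_setOf_eq,
            Set.mem_empty_iff_false, iff_false]
          rintro ⟨h, rfl, -⟩; exact hat h
      rw [e1, e2, e3, hqdecomp x, Finset.sum_mul_sum, Finset.sum_mul_sum]
      rw [Finset.sum_comm (γ := 𝔸)]
      refine Finset.sum_congr rfl fun a _ => Finset.sum_congr rfl fun a' _ => ?_
      by_cases hat : a' ∈ t
      · rw [if_pos hat, if_pos hat, hcde x a' a]
        ring
      · simp [hat]
    · intro hcross x a a'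
      have key : ∀ (a : 𝔸) {s : Set δ}, MeasurableSet s →
          μ.map (fun ω => g (a, x, ε ω)) s * μ (X ⁻¹' {x}) = μ (R ⁻¹' s ∩ X ⁻¹' {x}) := by
        intro a s hs
        have ht : A ⁻¹' ({a} : Set 𝔸) ∩ X ⁻¹' {x} = {ω | A ω = a ∧ X ω = x} := by
          ext ω; simp
        have h1 : R ⁻¹' s ∩ A ⁻¹' ({a} : Set 𝔸) ∩ X ⁻¹' {x}
            = R ⁻¹' s ∩ {ω | A ω = a ∧ X ω = x} := by
          rw [Set.inter_assoc, ht]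
        have := hcross s {a} hs x
        rw [h1, ht, claimA' a x hs] at this
        -- this : ν s * p * q = μ(R⁻¹s ∩ Fx) * p
        refine (ENNReal.mul_left_inj (hpos a x).ne' (measure_ne_top μ _)).mp ?_
        calc μ.map (fun ω => g (a, x, ε ω)) s * μ (X ⁻¹' {x}) * μ {ω | A ω = a ∧ X ω = x}
              = μ.map (fun ω => g (a, x, ε ω)) s * μ {ω | A ω = a ∧ X ω = x} * μ (X ⁻¹' {x}) := by
                ring
            _ = μ (R ⁻¹' s ∩ X ⁻¹' {x}) * μ {ω | A ω = a ∧ X ω = x} := this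
      apply Measure.ext
      intro s hs
      have h1 := key a hs
      have h2 := key a' hs
      exact (ENNReal.mul_left_inj (hqpos x) (measure_ne_top μ _)).mp (h1.trans h2.symm)
  rw [step1, condIndepFun_iff_condExp_inter_preimage_eq_mul hRmeas hA]
  -- relate Cross with the condexp formulation
  constructor
  · intro hcross s t hs ht
    have c1 := condexp_comap_discrete μ hX ((hRmeas hs).inter (hA ht))
    have c2 := condexp_comap_discrete μ hX (hRmeas hs)
    have c3 := condexp_comap_discrete μ hX (hA ht)
    refine c1.trans (Filter.EventuallyEq.trans (Filter.Eventually.of_forall fun ω => ?_)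
      ((c2.mul c3).symm))
    have h := hcross s t hs (X ω)
    have hq0 : (μ (X ⁻¹' {X ω})).toReal ≠ 0 :=
      ENNReal.toReal_ne_zero.mpr ⟨hqpos (X ω), measure_ne_top μ _⟩
    have hreal : (μ (R ⁻¹' s ∩ A ⁻¹' t ∩ X ⁻¹' {X ω})).toReal * (μ (X ⁻¹' {X ω})).toReal
        = (μ (R ⁻¹' s ∩ X ⁻¹' {X ω})).toReal * (μ (A ⁻¹' t ∩ X ⁻¹' {X ω})).toReal := by
      rw [← ENNReal.toReal_mul, ← ENNReal.toReal_mul, h]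
    show (μ (R ⁻¹' s ∩ A ⁻¹' t ∩ X ⁻¹' {X ω})).toReal / (μ (X ⁻¹' {X ω})).toReal
        = ((μ (R ⁻¹' s ∩ X ⁻¹' {X ω})).toReal / (μ (X ⁻¹' {X ω})).toReal)
          * ((μ (A ⁻¹' t ∩ X ⁻¹' {X ω})).toReal / (μ (X ⁻¹' {X ω})).toReal)
    rw [div_mul_div_comm, div_eq_div_iff hq0 (mul_ne_zero hq0 hq0)]
    calc (μ (R ⁻¹' s ∩ A ⁻¹' t ∩ X ⁻¹' {X ω})).toReal
          * ((μ (X ⁻¹' {X ω})).toReal * (μ (X ⁻¹' {X ω})).toReal)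
        = ((μ (R ⁻¹' s ∩ A ⁻¹' t ∩ X ⁻¹' {X ω})).toReal * (μ (X ⁻¹' {X ω})).toReal)
          * (μ (X ⁻¹' {X ω})).toReal := by ring
      _ = (μ (R ⁻¹' s ∩ X ⁻¹' {X ω})).toReal * (μ (A ⁻¹' t ∩ X ⁻¹' {X ω})).toReal
          * (μ (X ⁻¹' {X ω})).toReal := by rw [hreal]
  · intro h s t hs x
    have ht : MeasurableSet t := (Set.toFinite t).measurableSet
    have c1 := condexp_comap_discrete μ hX ((hRmeas hs).inter (hA ht))
    have c2 := condexp_comap_discrete μ hX (hRmeas hs)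
    have c3 := condexp_comap_discrete μ hX (hA ht)
    have hae : (fun ω => (μ (R ⁻¹' s ∩ A ⁻¹' t ∩ X ⁻¹' {X ω})).toReal
          / (μ (X ⁻¹' {X ω})).toReal)
        =ᵐ[μ] (fun ω => ((μ (R ⁻¹' s ∩ X ⁻¹' {X ω})).toReal / (μ (X ⁻¹' {X ω})).toReal)
          * ((μ (A ⁻¹' t ∩ X ⁻¹' {X ω})).toReal / (μ (X ⁻¹' {X ω})).toReal)) :=
      c1.symm.trans ((h s t hs ht).trans (c2.mul c3))
    have hpt := eq_of_comp_ae_eq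
      (X := X)
      (F := fun x => (μ (R ⁻¹' s ∩ A ⁻¹' t ∩ X ⁻¹' {x})).toReal / (μ (X ⁻¹' {x})).toReal)
      (G := fun x => ((μ (R ⁻¹' s ∩ X ⁻¹' {x})).toReal / (μ (X ⁻¹' {x})).toReal)
          * ((μ (A ⁻¹' t ∩ X ⁻¹' {x})).toReal / (μ (X ⁻¹' {x})).toReal))
      hae (hqpos x)
    have hq0 : (μ (X ⁻¹' {x})).toReal ≠ 0 :=
      ENNReal.toReal_ne_zero.mpr ⟨hqpos x, measure_ne_top μ _⟩
    have hreal : (μ (R ⁻¹' s ∩ A ⁻¹' t ∩ X ⁻¹' {x})).toReal * (μ (X ⁻¹' {x})).toReal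
        = (μ (R ⁻¹' s ∩ X ⁻¹' {x})).toReal * (μ (A ⁻¹' t ∩ X ⁻¹' {x})).toReal := by
      rw [div_mul_div_comm, div_eq_div_iff hq0 (mul_ne_zero hq0 hq0)] at hpt
      apply mul_right_cancel₀ hq0
      calc (μ (R ⁻¹' s ∩ A ⁻¹' t ∩ X ⁻¹' {x})).toReal * (μ (X ⁻¹' {x})).toReal
            * (μ (X ⁻¹' {x})).toReal
          = (μ (R ⁻¹' s ∩ A ⁻¹' t ∩ X ⁻¹' {x})).toReal
            * ((μ (X ⁻¹' {x})).toReal * (μ (X ⁻¹' {x})).toReal) := by ring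
        _ = (μ (R ⁻¹' s ∩ X ⁻¹' {x})).toReal * (μ (A ⁻¹' t ∩ X ⁻¹' {x})).toReal
            * (μ (X ⁻¹' {x})).toReal := hpt
    refine (ENNReal.toReal_eq_toReal_iff' ?_ ?_).mp ?_
    · exact ENNReal.mul_ne_top (measure_ne_top μ _) (measure_ne_top μ _)
    · exact ENNReal.mul_ne_top (measure_ne_top μ _) (measure_ne_top μ _)
    · rw [ENNReal.toReal_mul, ENNReal.toReal_mul, hreal]
end
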